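/- Let G be a group and P a right LCM submonoid of G, and for p ∈ P let V_p be the isometric shift on ℓ²(P). Then for all p, q ∈ P: if pP ∩ qP = wP for some w ∈ P, then V_p V_p* · V_q V_q* = V_w V_w*; and if pP ∩ qP = ∅, then V_p V_p* · V_q V_q* = 0. -/

import Mathlib

/-- The principal right ideal `pP = {p r : r ∈ P}` generated by `p`. -/
def rIdeal {G : Type*} [Group G] (P : Submonoid G) (p : G) : Set G :=
  {x | ∃ r ∈ P, x = p * r}

/-- The canonical orthonormal basis vector `δ_r` of `ℓ²(P)`. -/
noncomputable def delta {G : Type*} [Group G] (P : Submonoid G) (r : P) :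
    lp (fun _ : P => ℂ) 2 :=
  haveI := Classical.decEq P
  lp.single 2 r 1

section Aux
variable {G : Type*} [Group G] (P : Submonoid G)

open scoped InnerProductSpace

lemma delta_def [DecidableEq P] (r : P) : delta P r = lp.single 2 r 1 := by
  unfold delta
  congr!

lemma mem_rIdeal_iff_aux (p s : P) :
    (s : G) ∈ rIdeal P (p : G) ↔ ∃ t : P, s = p * t := by
  constructor
  · rintro ⟨r, hr, h⟩
    exact ⟨⟨r, hr⟩, Subtype.ext h⟩
  · rintro ⟨t, rfl⟩
    exact ⟨t, t.2, rfl⟩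

lemma mulP_cancel (p r t : P) : p * r = p * t ↔ r = t := by
  constructor
  · intro h
    have h2 := congrArg (Subtype.val) h
    simp only [Submonoid.coe_mul] at h2
    exact Subtype.ext (mul_left_cancel h2)
  · intro h; rw [h]

lemma delta_coord_aux [DecidableEq P] (s r : P) :
    (delta P s : ∀ _ : P, ℂ) r = if r = s then 1 else 0 := by
  classical
  simp [delta_def, lp.single_apply, Pi.single_apply]

lemma coord_eq_inner_aux (r : P) (x : lp (fun _ : P => ℂ) 2) :
    (x : ∀ _ : P, ℂ) r = ⟪delta P r, x⟫_ℂ := by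
  classical
  rw [delta_def, lp.inner_single_left]
  simp

lemma inner_delta_aux [DecidableEq P] (a b : P) :
    ⟪delta P a, delta P b⟫_ℂ = if a = b then 1 else 0 := by
  classical
  rw [delta_def, lp.inner_single_left, delta_coord_aux]
  simp [eq_comm]

lemma adjoint_delta_mem_aux (p : P) (V : lp (fun _ : P => ℂ) 2 →L[ℂ] lp (fun _ : P => ℂ) 2)
    (hV : ∀ r : P, V (delta P r) = delta P (p * r)) (t : P) :
    ContinuousLinearMap.adjoint V (delta P (p * t)) = delta P t := by
  classical
  apply lp.ext
  funext r
  rw [coord_eq_inner_aux, ContinuousLinearMap.adjoint_inner_right, hV, delta_coord_aux,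
    inner_delta_aux]
  simp only [mulP_cancel]

lemma adjoint_delta_not_aux (p : P) (V : lp (fun _ : P => ℂ) 2 →L[ℂ] lp (fun _ : P => ℂ) 2)
    (hV : ∀ r : P, V (delta P r) = delta P (p * r)) (s : P)
    (hs : ¬ ∃ t : P, s = p * t) :
    ContinuousLinearMap.adjoint V (delta P s) = 0 := by
  classical
  apply lp.ext
  funext r
  rw [coord_eq_inner_aux, ContinuousLinearMap.adjoint_inner_right, hV, inner_delta_aux,
    if_neg (fun h => hs ⟨r, h.symm⟩)]
  rfl

open scoped Classical in
lemma proj_delta_aux (p : P) (V : lp (fun _ : P => ℂ) 2 →L[ℂ] lp (fun _ : P => ℂ) 2)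
    (hV : ∀ r : P, V (delta P r) = delta P (p * r)) (s : P) :
    (V ∘L ContinuousLinearMap.adjoint V) (delta P s) =
      if (s : G) ∈ rIdeal P (p : G) then delta P s else 0 := by
  by_cases h : (s : G) ∈ rIdeal P (p : G)
  · rw [if_pos h]
    obtain ⟨t, rfl⟩ := (mem_rIdeal_iff_aux P p s).mp h
    simp [adjoint_delta_mem_aux P p V hV t, hV]
  · rw [if_neg h]
    have := adjoint_delta_not_aux P p V hV s (fun ht => h ((mem_rIdeal_iff_aux P p s).mpr ht))
    simp [this]

lemma clm_ext_aux (T S : lp (fun _ : P => ℂ) 2 →L[ℂ] lp (fun _ : P => ℂ) 2)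
    (h : ∀ r : P, T (delta P r) = S (delta P r)) : T = S := by
  classical
  refine ContinuousLinearMap.ext fun f => ?_
  have hf := lp.hasSum_single (E := fun _ : P => ℂ) ENNReal.ofNat_ne_top f
  have key : ∀ r : P, T (lp.single 2 r ((f : ∀ _ : P, ℂ) r)) =
      S (lp.single 2 r ((f : ∀ _ : P, ℂ) r)) := by
    intro r
    have h1 : lp.single 2 r ((f : ∀ _ : P, ℂ) r) = (f : ∀ _ : P, ℂ) r • delta P r := by
      rw [delta_def, ← lp.single_smul]
      simp
    rw [h1, map_smul, map_smul, h]
  exact (hf.mapL T).unique (by simpa only [key] using hf.mapL S)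

end Aux

open scoped Classical in
/-- For the isometric shifts on `ℓ²(P)` over a right LCM submonoid `P` of a group `G`:
if `pP ∩ qP = wP` then `V_p V_p* ⬝ V_q V_q* = V_w V_w*`, and if `pP ∩ qP = ∅` then
`V_p V_p* ⬝ V_q V_q* = 0`. -/
theorem shift_range_projections_nica {G : Type*} [Group G] (P : Submonoid G)
    (hLCM : ∀ p ∈ P, ∀ q ∈ P, (rIdeal P p ∩ rIdeal P q).Nonempty →
      ∃ w ∈ P, rIdeal P p ∩ rIdeal P q = rIdeal P w)
    (p q : P)
    (Vp Vq : lp (fun _ : P => ℂ) 2 →L[ℂ] lp (fun _ : P => ℂ) 2)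
    (hVp : ∀ r : P, Vp (delta P r) = delta P (p * r))
    (hVq : ∀ r : P, Vq (delta P r) = delta P (q * r)) :
    (∀ w : P, rIdeal P (p : G) ∩ rIdeal P (q : G) = rIdeal P (w : G) →
      ∀ Vw : lp (fun _ : P => ℂ) 2 →L[ℂ] lp (fun _ : P => ℂ) 2,
        (∀ r : P, Vw (delta P r) = delta P (w * r)) →
        (Vp ∘L ContinuousLinearMap.adjoint Vp) ∘L (Vq ∘L ContinuousLinearMap.adjoint Vq) =
          Vw ∘L ContinuousLinearMap.adjoint Vw) ∧
    (rIdeal P (p : G) ∩ rIdeal P (q : G) = ∅ →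
      (Vp ∘L ContinuousLinearMap.adjoint Vp) ∘L (Vq ∘L ContinuousLinearMap.adjoint Vq) = 0) := by
  have key : ∀ s : P,
      ((Vp ∘L ContinuousLinearMap.adjoint Vp) ∘L (Vq ∘L ContinuousLinearMap.adjoint Vq))
        (delta P s) =
      if (s : G) ∈ rIdeal P (p : G) ∩ rIdeal P (q : G) then delta P s else 0 := by
    intro s
    rw [ContinuousLinearMap.comp_apply, proj_delta_aux P q Vq hVq s]
    by_cases hq : (s : G) ∈ rIdeal P (q : G)
    · rw [if_pos hq, proj_delta_aux P p Vp hVp s]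
      by_cases hp : (s : G) ∈ rIdeal P (p : G)
      · rw [if_pos hp, if_pos ⟨hp, hq⟩]
      · rw [if_neg hp, if_neg (fun h => hp h.1)]
    · rw [if_neg hq, map_zero, if_neg (fun h => hq h.2)]
  constructor
  · intro w hw Vw hVw
    refine clm_ext_aux P _ _ fun s => ?_
    rw [key s, proj_delta_aux P w Vw hVw s]
    simp only [hw]
  · intro hw
    refine clm_ext_aux P _ _ fun s => ?_
    rw [key s]
    simp [hw]
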